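/- If the linear system is completely herdable, then there exists an entrywise positive vector k in the range of the n x (n+m) matrix [A B] obtained by concatenating A and B. -/

import Mathlib

open MeasureTheory

/-- The state of the LTI system `x' = A x + B u` at time `tf`, starting from `x0`
under the input `u`:  `x(tf) = exp(tf A) x0 + ∫_0^tf exp((tf-τ) A) B u(τ) dτ`. -/
noncomputable def stateAt {n m : ℕ} (A : Matrix (Fin n) (Fin n) ℝ) (B : Matrix (Fin n) (Fin m) ℝ)
    (x0 : Fin n → ℝ) (u : ℝ → Fin m → ℝ) (tf : ℝ) : Fin n → ℝ :=
  (NormedSpace.exp (tf • A)).mulVec x0 +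
    ∫ τ in (0:ℝ)..tf, (NormedSpace.exp ((tf - τ) • A) * B).mulVec (u τ)

/-- The input `u` is admissible (integrable) on `[0, tf]`. -/
def ValidInput {n m : ℕ} (A : Matrix (Fin n) (Fin n) ℝ) (B : Matrix (Fin n) (Fin m) ℝ)
    (tf : ℝ) (u : ℝ → Fin m → ℝ) : Prop :=
  IntervalIntegrable (fun τ => (NormedSpace.exp ((tf - τ) • A) * B).mulVec (u τ)) volume 0 tf

/-- A subset `S` of the states is herdable: from every initial condition and for every
threshold `h ≥ 0` there are a finite time `tf > 0` and an input driving every state in `S`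
at least to `h` at time `tf`. -/
def Herdable {n m : ℕ} (A : Matrix (Fin n) (Fin n) ℝ) (B : Matrix (Fin n) (Fin m) ℝ)
    (S : Set (Fin n)) : Prop :=
  ∀ x0 : Fin n → ℝ, ∀ h : ℝ, 0 ≤ h →
    ∃ tf : ℝ, 0 < tf ∧ ∃ u : ℝ → Fin m → ℝ, ValidInput A B tf u ∧
      ∀ i ∈ S, h ≤ stateAt A B x0 u tf i

/-- The controllability matrix `C = [B, AB, …, A^{n-1} B]`; the column indexed by
`(d, j)` is the `j`-th column of `A^d B`. -/
def ctrb {n m : ℕ} (A : Matrix (Fin n) (Fin n) ℝ) (B : Matrix (Fin n) (Fin m) ℝ) :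
    Matrix (Fin n) (Fin n × Fin m) ℝ := fun i p => (A ^ (p.1 : ℕ) * B) i p.2

set_option maxHeartbeats 1000000 in
/-- If the system is completely herdable, then the range of the `n × (n+m)` matrix
`[A B]` contains an entrywise positive vector. -/
theorem range_AB_pos_of_completelyHerdable {n m : ℕ}
    (A : Matrix (Fin n) (Fin n) ℝ) (B : Matrix (Fin n) (Fin m) ℝ)
    (H : Herdable A B Set.univ) :
    ∃ k : Fin n → ℝ, (∃ y : Fin n ⊕ Fin m → ℝ, (Matrix.fromCols A B).mulVec y = k) ∧
      ∀ i : Fin n, 0 < k i := by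
  obtain ⟨tf, htf, u, hu, hx⟩ := H 0 1 zero_le_one
  set S : Submodule ℝ (Fin n → ℝ) := LinearMap.range (Matrix.fromCols A B).mulVecLin with hS
  have hmemA : ∀ w : Fin n → ℝ, A.mulVec w ∈ S := by
    intro w
    refine ⟨Sum.elim w 0, ?_⟩
    rw [Matrix.mulVecLin_apply, Matrix.fromCols_mulVec_sumElim, Matrix.mulVec_zero, add_zero]
  have hmemB : ∀ w : Fin m → ℝ, B.mulVec w ∈ S := by
    intro w
    refine ⟨Sum.elim 0 w, ?_⟩
    rw [Matrix.mulVecLin_apply, Matrix.fromCols_mulVec_sumElim, Matrix.mulVec_zero, zero_add]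
  have hclosed : IsClosed (S : Set (Fin n → ℝ)) := Submodule.closed_of_finiteDimensional S
  set f : ℝ → Fin n → ℝ := fun τ => (NormedSpace.exp ((tf - τ) • A) * B).mulVec (u τ) with hf
  have hfS : ∀ τ : ℝ, f τ ∈ S := by
    intro τ
    set v : Fin n → ℝ := B.mulVec (u τ) with hv
    -- the continuous linear map M ↦ M.mulVec v
    let Lℓ : Matrix (Fin n) (Fin n) ℝ →ₗ[ℝ] (Fin n → ℝ) :=
      { toFun := fun M => M.mulVec v
        map_add' := fun M N => Matrix.add_mulVec M N v
        map_smul' := fun c M => (Matrix.smul_mulVec c M v) }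
    let L : Matrix (Fin n) (Fin n) ℝ →L[ℝ] (Fin n → ℝ) := LinearMap.toContinuousLinearMap Lℓ
    letI : SeminormedRing (Matrix (Fin n) (Fin n) ℝ) := Matrix.linftyOpSemiNormedRing
    letI : NormedRing (Matrix (Fin n) (Fin n) ℝ) := Matrix.linftyOpNormedRing
    letI : NormedAlgebra ℝ (Matrix (Fin n) (Fin n) ℝ) := Matrix.linftyOpNormedAlgebra
    have hsum : HasSum (fun k : ℕ => ((Nat.factorial k : ℝ))⁻¹ • ((tf - τ) • A) ^ k)
        (NormedSpace.exp ((tf - τ) • A)) := NormedSpace.exp_series_hasSum_exp' _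
    have hsum2 : HasSum (fun k : ℕ => L (((Nat.factorial k : ℝ))⁻¹ • ((tf - τ) • A) ^ k))
        (L (NormedSpace.exp ((tf - τ) • A))) := hsum.mapL L
    have hterm : ∀ k : ℕ, L (((Nat.factorial k : ℝ))⁻¹ • ((tf - τ) • A) ^ k) ∈ S := by
      intro k
      have hpow : ∀ k : ℕ, (A ^ k).mulVec v ∈ S := by
        intro k
        induction k with
        | zero => simpa using hmemB (u τ)
        | succ k ih =>
          rw [pow_succ', ← Matrix.mulVec_mulVec]
          exact hmemA _
      have : L (((Nat.factorial k : ℝ))⁻¹ • ((tf - τ) • A) ^ k)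
          = ((Nat.factorial k : ℝ))⁻¹ • ((tf - τ) ^ k) • (A ^ k).mulVec v := by
        show (((Nat.factorial k : ℝ))⁻¹ • ((tf - τ) • A) ^ k).mulVec v = _
        simp [smul_pow, Matrix.smul_mulVec]
      rw [this]
      exact Submodule.smul_mem _ _ (Submodule.smul_mem _ _ (hpow k))
    have hLexp : L (NormedSpace.exp ((tf - τ) • A)) ∈ S := by
      refine hclosed.mem_of_tendsto hsum2.tendsto_sum_nat
        (Filter.Eventually.of_forall fun N => ?_)
      exact Submodule.sum_mem S fun k _ => hterm k
    have : f τ = L (NormedSpace.exp ((tf - τ) • A)) := by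
      show (NormedSpace.exp ((tf - τ) • A) * B).mulVec (u τ) = _
      show _ = (NormedSpace.exp ((tf - τ) • A)).mulVec v
      rw [hv, Matrix.mulVec_mulVec]
    rw [this]
    exact hLexp
  -- projection onto S
  obtain ⟨T, hT⟩ := Submodule.exists_isCompl S
  let Pℓ : (Fin n → ℝ) →ₗ[ℝ] (Fin n → ℝ) :=
    S.subtype.comp (S.projectionOnto T hT)
  let P : (Fin n → ℝ) →L[ℝ] (Fin n → ℝ) := LinearMap.toContinuousLinearMap Pℓ
  have hPfix : ∀ x ∈ S, P x = x := by
    intro x hxS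
    show S.subtype (S.projectionOnto T hT x) = x
    have := Submodule.projectionOnto_apply_left hT ⟨x, hxS⟩
    rw [show x = ((⟨x, hxS⟩ : S) : Fin n → ℝ) from rfl, this]
    rfl
  have hPmem : ∀ x : Fin n → ℝ, P x ∈ S := fun x =>
    (S.projectionOnto T hT x).2
  have hstate : stateAt A B 0 u tf = ∫ τ in (0:ℝ)..tf, f τ := by
    simp [stateAt, Matrix.mulVec_zero, hf]
  have hint : (∫ τ in (0:ℝ)..tf, f τ) ∈ S := by
    have heq : (∫ τ in (0:ℝ)..tf, f τ) = ∫ τ in (0:ℝ)..tf, P (f τ) := by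
      refine intervalIntegral.integral_congr fun τ _ => ?_
      rw [hPfix _ (hfS τ)]
    rw [heq, P.intervalIntegral_comp_comm hu]
    exact hPmem _
  refine ⟨stateAt A B 0 u tf, ?_, fun i =>
    lt_of_lt_of_le one_pos (hx i (Set.mem_univ i))⟩
  rw [hstate]
  obtain ⟨y, hy⟩ := hint
  exact ⟨y, hy⟩
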